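/- The Schur multiplier H²(G, ℂˣ) of the Heisenberg group over ℤ/3ℤ (the nonabelian group of order 27 and exponent 3) is isomorphic to ℤ/3ℤ × ℤ/3ℤ. -/

import Mathlib

/-- The Heisenberg group over a commutative ring `R`: triples `(x, y, z)`
corresponding to the upper unitriangular matrices `![![1, x, z], ![0, 1, y], ![0, 0, 1]]`,
with multiplication given by matrix multiplication. -/
@[ext]
structure Heisenberg (R : Type*) [CommRing R] where
  x : R
  y : R
  z : R

namespace Heisenberg

variable {R : Type*} [CommRing R]

instance : Mul (Heisenberg R) :=
  ⟨fun a b => ⟨a.x + b.x, a.y + b.y, a.z + b.z + a.x * b.y⟩⟩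

instance : One (Heisenberg R) := ⟨⟨0, 0, 0⟩⟩

instance : Inv (Heisenberg R) := ⟨fun a => ⟨-a.x, -a.y, a.x * a.y - a.z⟩⟩

@[simp] theorem mul_x (a b : Heisenberg R) : (a * b).x = a.x + b.x := rfl
@[simp] theorem mul_y (a b : Heisenberg R) : (a * b).y = a.y + b.y := rfl
@[simp] theorem mul_z (a b : Heisenberg R) : (a * b).z = a.z + b.z + a.x * b.y := rfl
@[simp] theorem one_x : (1 : Heisenberg R).x = 0 := rfl
@[simp] theorem one_y : (1 : Heisenberg R).y = 0 := rfl
@[simp] theorem one_z : (1 : Heisenberg R).z = 0 := rfl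
@[simp] theorem inv_x (a : Heisenberg R) : a⁻¹.x = -a.x := rfl
@[simp] theorem inv_y (a : Heisenberg R) : a⁻¹.y = -a.y := rfl
@[simp] theorem inv_z (a : Heisenberg R) : a⁻¹.z = a.x * a.y - a.z := rfl

instance instGroup : Group (Heisenberg R) where
  mul_assoc a b c := by ext <;> simp <;> ring
  one_mul a := by ext <;> simp
  mul_one a := by ext <;> simp
  inv_mul_cancel a := by ext <;> simp

/-- The triple `(x,y,z)` corresponds to the matrix `![![1,x,z],![0,1,y],![0,0,1]]`,
and multiplication is matrix multiplication (in the `(x, y, z)` coordinates). -/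
theorem mul_def (a b : Heisenberg R) :
    a * b = ⟨a.x + b.x, a.y + b.y, a.z + b.z + a.x * b.y⟩ := rfl

end Heisenberg

/-- The group of 2-cocycles on `G` with values in `ℂˣ` (trivial action). -/
def twoCocycles (G : Type*) [Group G] : Subgroup (G → G → ℂˣ) where
  carrier := {f | ∀ g h k, f g h * f (g * h) k = f g (h * k) * f h k}
  one_mem' := by intro g h k; simp
  mul_mem' := by
    intro f₁ f₂ h1 h2 g h k
    simp only [Pi.mul_apply]
    rw [mul_mul_mul_comm, h1 g h k, h2 g h k, mul_mul_mul_comm]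
  inv_mem' := by
    intro f hf g h k
    simp only [Pi.inv_apply]
    rw [← mul_inv, hf g h k, mul_inv]

/-- The group of 2-coboundaries on `G` with values in `ℂˣ` (trivial action). -/
def twoCoboundaries (G : Type*) [Group G] : Subgroup (G → G → ℂˣ) where
  carrier := {f | ∃ c : G → ℂˣ, ∀ g h, f g h = c g * c h * (c (g * h))⁻¹}
  one_mem' := ⟨fun _ => 1, by simp⟩
  mul_mem' := by
    rintro f₁ f₂ ⟨c₁, h1⟩ ⟨c₂, h2⟩
    refine ⟨c₁ * c₂, fun g h => ?_⟩
    simp only [Pi.mul_apply, h1 g h, h2 g h, mul_inv]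
    simp [mul_assoc, mul_comm, mul_left_comm]
  inv_mem' := by
    rintro f ⟨c, hc⟩
    refine ⟨c⁻¹, fun g h => ?_⟩
    simp only [Pi.inv_apply, hc g h, mul_inv, inv_inv]

/-- The Schur multiplier `H²(G, ℂˣ)` (with trivial `G`-action on `ℂˣ`):
2-cocycles modulo 2-coboundaries. -/
def schurMultiplier (G : Type*) [Group G] :=
  twoCocycles G ⧸ ((twoCoboundaries G).subgroupOf (twoCocycles G))

instance (G : Type*) [Group G] : CommGroup (schurMultiplier G) :=
  QuotientGroup.Quotient.commGroup _

noncomputable section SchurAux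

namespace SchurAux

open Complex

abbrev G3 := Heisenberg (ZMod 3)

def ga : G3 := ⟨1, 0, 0⟩
def gb : G3 := ⟨0, 1, 0⟩
def gc : G3 := ⟨0, 0, 1⟩

def ω : ℂˣ := Units.mk0 (Complex.exp (2 * Real.pi * Complex.I / 3)) (Complex.exp_ne_zero _)

lemma isPrim : IsPrimitiveRoot (ω : ℂ) 3 := by
  have h := Complex.isPrimitiveRoot_exp 3 (by norm_num)
  convert h using 2
  simp [ω]

lemma ω_pow3 : ω ^ 3 = 1 := by
  ext
  push_cast
  exact isPrim.pow_eq_one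

lemma ω_ne_one : ω ≠ 1 := by
  intro h
  exact isPrim.ne_one (by norm_num) (by rw [h]; rfl)

lemma ω_sq_ne_one : ω ^ 2 ≠ 1 := by
  intro h
  have h2 := isPrim.pow_ne_one_of_pos_of_lt (l := 2) (by norm_num) (by norm_num)
  apply h2
  have := congrArg (Units.val) h
  push_cast at this
  exact this

lemma ω_sq_ne_ω : ω ^ 2 ≠ ω := by
  intro h
  apply ω_ne_one
  have : ω * ω = ω * 1 := by rw [mul_one, ← sq, h]
  exact mul_left_cancel this

lemma ω_sum : 1 + (ω : ℂ) + (ω : ℂ) ^ 2 = 0 := by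
  have h3 : (ω : ℂ) ^ 3 = 1 := isPrim.pow_eq_one
  have hne : (ω : ℂ) ≠ 1 := fun h => ω_ne_one (Units.ext h)
  have hsplit : ((ω : ℂ) - 1) * (1 + (ω : ℂ) + (ω : ℂ) ^ 2) = 0 := by linear_combination h3
  rcases mul_eq_zero.mp hsplit with h | h
  · exact absurd (sub_eq_zero.mp h) hne
  · exact h

/-- classification of cube roots of unity among units -/
lemma cube_root_cases {u : ℂˣ} (h : u ^ 3 = 1) : u = 1 ∨ u = ω ∨ u = ω ^ 2 := by
  have hc : (u : ℂ) ^ 3 = 1 := by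
    have := congrArg (Units.val) h; push_cast at this; exact this
  have h3 : (ω : ℂ) ^ 3 = 1 := isPrim.pow_eq_one
  have key : ((u : ℂ) - 1) * (((u : ℂ) - ω) * ((u : ℂ) - ω ^ 2)) = 0 := by
    linear_combination hc + (-(u:ℂ)^2 + (u:ℂ)) * ω_sum + ((u:ℂ) - 1) * h3
  rcases mul_eq_zero.mp key with h1 | h1
  · left; ext; push_cast; linear_combination h1
  · rcases mul_eq_zero.mp h1 with h2 | h2
    · right; left; ext; push_cast; linear_combination h2
    · right; right; ext; push_cast; linear_combination h2



/-- discrete log base ω on cube roots of unity -/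
def L (u : ℂˣ) : ZMod 3 := if u = ω then 1 else if u = ω ^ 2 then 2 else 0

@[simp] lemma L_one : L 1 = 0 := by
  rw [L, if_neg (Ne.symm ω_ne_one), if_neg (Ne.symm ω_sq_ne_one)]

@[simp] lemma L_ω : L ω = 1 := by rw [L, if_pos rfl]

@[simp] lemma L_ω_sq : L (ω ^ 2) = 2 := by rw [L, if_neg ω_sq_ne_ω, if_pos rfl]

lemma L_mul {u v : ℂˣ} (hu : u ^ 3 = 1) (hv : v ^ 3 = 1) : L (u * v) = L u + L v := by
  have hω3 := ω_pow3
  rcases cube_root_cases hu with rfl | rfl | rfl <;>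
    rcases cube_root_cases hv with rfl | rfl | rfl <;>
    simp only [one_mul, mul_one, L_one, L_ω, L_ω_sq, add_zero, zero_add]
  · rw [← sq, L_ω_sq]; rfl
  · rw [show ω * ω ^ 2 = 1 by rw [← pow_succ']; exact hω3, L_one]; rfl
  · rw [show ω ^ 2 * ω = 1 by rw [← pow_succ]; exact hω3, L_one]; rfl
  · rw [show ω ^ 2 * ω ^ 2 = ω by
        rw [← pow_add]; rw [pow_eq_pow_mod _ hω3]; norm_num, L_ω]; rfl

lemma L_eq_zero {u : ℂˣ} (hu : u ^ 3 = 1) (h : L u = 0) : u = 1 := by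
  rcases cube_root_cases hu with rfl | rfl | rfl
  · rfl
  · rw [L_ω] at h; exact absurd h (by decide)
  · rw [L_ω_sq] at h; exact absurd h (by decide)

/-- ω to a `ZMod 3` power -/
def Φ (u : ZMod 3) : ℂˣ := ω ^ u.val

lemma Φ_add (u v : ZMod 3) : Φ (u + v) = Φ u * Φ v := by
  rw [Φ, Φ, Φ, ← pow_add, ZMod.val_add]
  exact (pow_eq_pow_mod _ ω_pow3).symm

lemma Φ_cocycle {e : G3 → G3 → ZMod 3}
    (he : ∀ g h k : G3, e g h + e (g * h) k = e g (h * k) + e h k) :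
    (fun g h => Φ (e g h)) ∈ twoCocycles G3 := by
  intro g h k
  simp only []
  rw [← Φ_add, ← Φ_add, he]

def f₁ : twoCocycles G3 :=
  ⟨fun g h => Φ (g.x * h.z + 2 * g.x ^ 2 * h.y), by
    apply Φ_cocycle
    intro g h k
    simp only [Heisenberg.mul_x, Heisenberg.mul_y, Heisenberg.mul_z]
    have h3 : (3 : ZMod 3) = 0 := by decide
    ring_nf
    linear_combination (g.x * h.x * k.y) * h3⟩

def f₂ : twoCocycles G3 :=
  ⟨fun g h => Φ (g.z * h.y + 2 * g.x * h.y ^ 2), by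
    apply Φ_cocycle
    intro g h k
    simp only [Heisenberg.mul_x, Heisenberg.mul_y, Heisenberg.mul_z]
    have h3 : (3 : ZMod 3) = 0 := by decide
    ring_nf
    linear_combination (-(g.x * h.y * k.y)) * h3⟩



instance : DecidableEq G3 := fun g h =>
  decidable_of_iff (g.x = h.x ∧ g.y = h.y ∧ g.z = h.z)
    ⟨fun ⟨a, b, c⟩ => Heisenberg.ext a b c, fun h' => by subst h'; exact ⟨rfl, rfl, rfl⟩⟩

/-- the antisymmetrization of a cocycle -/
def Bc (f : G3 → G3 → ℂˣ) (g h : G3) : ℂˣ := f g h * (f h g)⁻¹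

section CocycleFacts

variable {f : G3 → G3 → ℂˣ} (hf : ∀ g h k, f g h * f (g * h) k = f g (h * k) * f h k)

include hf

lemma f_one_left (g : G3) : f 1 g = f 1 1 := by
  have h := hf 1 1 g
  rw [one_mul, one_mul] at h
  exact (mul_right_cancel h).symm

lemma f_one_right (g : G3) : f g 1 = f 1 1 := by
  have h := hf g 1 1
  rw [mul_one, one_mul] at h
  exact mul_left_cancel h

lemma Bc_one_left (g : G3) : Bc f 1 g = 1 := by
  rw [Bc, f_one_right hf g, f_one_left hf g, mul_inv_cancel]

lemma Bc_mul_left {g h k : G3} (hgk : g * k = k * g) (hhk : h * k = k * h) :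
    Bc f (g * h) k = Bc f g k * Bc f h k := by
  have h1 := hf g h k
  have h2 := hf k g h
  have h3 := hf g k h
  rw [hgk, ← hhk] at h3
  -- h3 : f g k * f (k*g) h = f g (h * k) * f k h
  have main : f (g*h) k * f k g * f k h = f g k * f h k * f k (g*h) := by
    apply mul_left_cancel (a := f g h * f (k*g) h)
    calc f g h * f (k*g) h * (f (g*h) k * f k g * f k h)
        = (f g h * f (g*h) k) * (f k g * f (k*g) h) * f k h := by
          simp only [mul_comm, mul_left_comm, mul_assoc]
      _ = (f g (h*k) * f h k) * (f k (g*h) * f g h) * f k h := by rw [h1, h2]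
      _ = (f g (h*k) * f k h) * (f h k * (f k (g*h) * f g h)) := by
          simp only [mul_comm, mul_left_comm, mul_assoc]
      _ = (f g k * f (k*g) h) * (f h k * (f k (g*h) * f g h)) := by rw [← h3]
      _ = f g h * f (k*g) h * (f g k * f h k * f k (g*h)) := by
          simp only [mul_comm, mul_left_comm, mul_assoc]
  have mainC : (f (g*h) k : ℂ) * f k g * f k h = f g k * f h k * f k (g*h) := by
    have := congrArg Units.val main
    push_cast at this
    exact this
  rw [Bc, Bc, Bc]
  ext
  simp only [Units.val_mul, Units.val_inv_eq_inv_val]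
  field_simp
  linear_combination mainC

lemma Bc_cube {g k : G3} (hgk : g * k = k * g) (hg3 : g * g * g = 1) :
    Bc f g k ^ 3 = 1 := by
  have hgg : (g * g) * k = k * (g * g) := by
    rw [mul_assoc, hgk, ← mul_assoc, hgk, mul_assoc]
  have e1 : Bc f (g * g) k = Bc f g k * Bc f g k := Bc_mul_left hf hgk hgk
  have e2 : Bc f (g * g * g) k = Bc f (g * g) k * Bc f g k := Bc_mul_left hf hgg hgk
  rw [hg3, Bc_one_left hf] at e2
  rw [pow_succ, pow_two, ← e1, ← e2]

end CocycleFacts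


lemma exists_cubert (x : ℂˣ) : ∃ r : ℂˣ, r ^ 3 = x := by
  obtain ⟨z, hz⟩ := IsAlgClosed.exists_pow_nat_eq (x : ℂ) (n := 3) (by norm_num)
  have hz0 : z ≠ 0 := by
    intro h; apply x.ne_zero; rw [← hz, h]; ring
  refine ⟨Units.mk0 z hz0, ?_⟩
  ext; push_cast; exact hz

lemma swap3 {Γ : Type*} [Group Γ] {a b : Γ} (h : a * b = b * a) (c : Γ) :
    a * (b * c) = b * (a * c) := by rw [← mul_assoc, h, mul_assoc]

lemma pow_eq_of_zmod {Γ : Type*} [Monoid Γ] {X : Γ} (h3 : X ^ 3 = 1) {m n : ℕ}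
    (h : (m : ZMod 3) = n) : X ^ m = X ^ n := by
  rw [pow_eq_pow_mod m h3, pow_eq_pow_mod n h3]
  congr 1
  exact (ZMod.natCast_eq_natCast_iff' m n 3).mp h

lemma commpow {Γ : Type*} [Group Γ] {A B C : Γ} (hCA : Commute C A) (hCB : Commute C B)
    (hc : A * B = C * (B * A)) : ∀ m n : ℕ, A ^ m * B ^ n = C ^ (m * n) * (B ^ n * A ^ m) := by
  have h1 : ∀ m : ℕ, A ^ m * B = C ^ m * (B * A ^ m) := by
    intro m
    induction m with
    | zero => simp
    | succ k ih =>
      have hAC : A * C ^ k = C ^ k * A := (hCA.symm.pow_right k).eq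
      calc A ^ (k + 1) * B = A * (A ^ k * B) := by rw [pow_succ']; rw [mul_assoc]
        _ = A * (C ^ k * (B * A ^ k)) := by rw [ih]
        _ = (A * C ^ k) * (B * A ^ k) := by rw [mul_assoc]
        _ = (C ^ k * A) * (B * A ^ k) := by rw [hAC]
        _ = C ^ k * ((A * B) * A ^ k) := by simp only [mul_assoc]
        _ = C ^ k * ((C * (B * A)) * A ^ k) := by rw [hc]
        _ = C ^ (k + 1) * (B * A ^ (k + 1)) := by
            rw [pow_succ, pow_succ']; simp only [mul_assoc]
  intro m n
  induction n with
  | zero => simp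
  | succ k ih =>
    have hBC : C ^ m * B ^ k = B ^ k * C ^ m := (hCB.pow_pow m k).eq
    calc A ^ m * B ^ (k + 1) = (A ^ m * B ^ k) * B := by rw [pow_succ, ← mul_assoc]
      _ = (C ^ (m * k) * (B ^ k * A ^ m)) * B := by rw [ih]
      _ = C ^ (m * k) * (B ^ k * (A ^ m * B)) := by simp only [mul_assoc]
      _ = C ^ (m * k) * (B ^ k * (C ^ m * (B * A ^ m))) := by rw [h1 m]
      _ = C ^ (m * k) * ((B ^ k * C ^ m) * (B * A ^ m)) := by simp only [mul_assoc]
      _ = C ^ (m * k) * ((C ^ m * B ^ k) * (B * A ^ m)) := by rw [hBC]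
      _ = (C ^ (m * k) * C ^ m) * ((B ^ k * B) * A ^ m) := by simp only [mul_assoc]
      _ = C ^ (m * (k + 1)) * (B ^ (k + 1) * A ^ m) := by
          rw [← pow_add, ← pow_succ, Nat.mul_succ]

/-- The central extension of `G3` by `ℂˣ` determined by a 2-cocycle. -/
@[ext]
structure Ext (F : twoCocycles G3) : Type where
  s : ℂˣ
  g : G3

namespace Ext

variable {F : twoCocycles G3}

instance : Mul (Ext F) := ⟨fun p q => ⟨p.s * q.s * F.1 p.g q.g, p.g * q.g⟩⟩
instance : One (Ext F) := ⟨⟨(F.1 1 1)⁻¹, 1⟩⟩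
instance : Inv (Ext F) := ⟨fun p => ⟨(p.s * F.1 p.g p.g⁻¹ * F.1 1 1)⁻¹, p.g⁻¹⟩⟩

@[simp] lemma mul_s (p q : Ext F) : (p * q).s = p.s * q.s * F.1 p.g q.g := rfl
@[simp] lemma mul_g (p q : Ext F) : (p * q).g = p.g * q.g := rfl
@[simp] lemma one_s : (1 : Ext F).s = (F.1 1 1)⁻¹ := rfl
@[simp] lemma one_g : (1 : Ext F).g = 1 := rfl
@[simp] lemma inv_s (p : Ext F) : p⁻¹.s = (p.s * F.1 p.g p.g⁻¹ * F.1 1 1)⁻¹ := rfl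
@[simp] lemma inv_g (p : Ext F) : p⁻¹.g = p.g⁻¹ := rfl

lemma coc : ∀ g h k : G3, F.1 g h * F.1 (g * h) k = F.1 g (h * k) * F.1 h k := F.2

lemma f_inv_symm (g : G3) : F.1 g g⁻¹ = F.1 g⁻¹ g := by
  have h := coc (F := F) g g⁻¹ g
  rw [mul_inv_cancel, inv_mul_cancel, f_one_left (coc (F := F)) g,
    f_one_right (coc (F := F)) g, mul_comm] at h
  exact mul_left_cancel h

instance instGroup : Group (Ext F) where
  mul_assoc p q r := by
    have hcoc := coc (F := F) p.g q.g r.g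
    have hcocC := congrArg Units.val hcoc
    push_cast at hcocC
    ext
    · show ((p.s * q.s * F.1 p.g q.g) * r.s * F.1 (p.g * q.g) r.g : ℂ)
        = (p.s * (q.s * r.s * F.1 q.g r.g) * F.1 p.g (q.g * r.g) : ℂ)
      push_cast
      linear_combination (p.s * q.s * r.s : ℂ) * hcocC
    all_goals simp [mul_assoc]
  one_mul p := by
    ext
    · show ((F.1 1 1)⁻¹ * p.s * F.1 1 p.g : ℂ) = (p.s : ℂ)
      rw [f_one_left (coc (F := F)) p.g]
      push_cast
      field_simp
    all_goals simp
  mul_one p := by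
    ext
    · show (p.s * (F.1 1 1)⁻¹ * F.1 p.g 1 : ℂ) = (p.s : ℂ)
      rw [f_one_right (coc (F := F)) p.g]
      push_cast
      field_simp
    all_goals simp
  inv_mul_cancel p := by
    ext
    · simp only [mul_s, inv_s, inv_g, one_s]
      rw [← f_inv_symm]
      push_cast
      field_simp
    all_goals simp

/-- projection to `G3` -/
def π : Ext F →* G3 where
  toFun := Ext.g
  map_one' := rfl
  map_mul' _ _ := rfl

end Ext



lemma ga_pow (n : ℕ) : (ga ^ n : G3) = ⟨(n : ZMod 3), 0, 0⟩ := by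
  induction n with
  | zero => rfl
  | succ k ih =>
    rw [pow_succ, ih]
    refine Heisenberg.ext ?_ ?_ ?_ <;> simp [ga] <;> push_cast <;> ring

lemma gb_pow (n : ℕ) : (gb ^ n : G3) = ⟨0, (n : ZMod 3), 0⟩ := by
  induction n with
  | zero => rfl
  | succ k ih =>
    rw [pow_succ, ih]
    refine Heisenberg.ext ?_ ?_ ?_ <;> simp [gb] <;> push_cast <;> ring

lemma gc_pow (n : ℕ) : (gc ^ n : G3) = ⟨0, 0, (n : ZMod 3)⟩ := by
  induction n with
  | zero => rfl
  | succ k ih =>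
    rw [pow_succ, ih]
    refine Heisenberg.ext ?_ ?_ ?_ <;> simp [gc] <;> push_cast <;> ring

theorem splits (F : twoCocycles G3) (hac : F.1 ga gc = F.1 gc ga)
    (hbc : F.1 gb gc = F.1 gc gb) : (F.1 : G3 → G3 → ℂˣ) ∈ twoCoboundaries G3 := by
  classical
  obtain ⟨rA, hrA⟩ := exists_cubert ((F.1 1 1 * F.1 ga ga * F.1 (ga * ga) ga)⁻¹)
  obtain ⟨rB, hrB⟩ := exists_cubert ((F.1 1 1 * F.1 gb gb * F.1 (gb * gb) gb)⁻¹)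
  set A : Ext F := ⟨rA, ga⟩ with hA
  set B : Ext F := ⟨rB, gb⟩ with hB
  set C : Ext F := A * B * A⁻¹ * B⁻¹ with hC
  -- everything with second component gc commutes with A and B
  have hComA : ∀ v : ℂˣ, (⟨v, gc⟩ : Ext F) * A = A * ⟨v, gc⟩ := by
    intro v
    refine Ext.ext ?_ ?_
    · show v * rA * F.1 gc ga = rA * v * F.1 ga gc
      rw [hac, mul_comm v rA]
    · show gc * ga = ga * gc
      decide
  have hComB : ∀ v : ℂˣ, (⟨v, gc⟩ : Ext F) * B = B * ⟨v, gc⟩ := by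
    intro v
    refine Ext.ext ?_ ?_
    · show v * rB * F.1 gc gb = rB * v * F.1 gb gc
      rw [hbc, mul_comm v rB]
    · show gc * gb = gb * gc
      decide
  have hCg : C.g = gc := by
    show ((ga * gb) * ga⁻¹) * gb⁻¹ = gc
    decide
  have hCeta : C = ⟨C.s, gc⟩ := Ext.ext rfl hCg
  have hCA : Commute C A := by rw [Commute, SemiconjBy, hCeta]; exact hComA C.s
  have hCB : Commute C B := by rw [Commute, SemiconjBy, hCeta]; exact hComB C.s
  have hc : A * B = C * (B * A) := by rw [hC]; group
  -- orders
  have hA3 : A ^ 3 = 1 := by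
    rw [pow_three']
    refine Ext.ext ?_ ?_
    · show rA * rA * F.1 ga ga * rA * F.1 (ga * ga) ga = (F.1 1 1)⁻¹
      apply eq_inv_of_mul_eq_one_left
      calc rA * rA * F.1 ga ga * rA * F.1 (ga * ga) ga * F.1 1 1
          = rA ^ 3 * (F.1 1 1 * F.1 ga ga * F.1 (ga * ga) ga) := by
            rw [pow_three']; simp only [mul_comm, mul_left_comm, mul_assoc]
        _ = 1 := by rw [hrA, inv_mul_cancel]
    · show (ga * ga) * ga = 1
      decide
  have hB3 : B ^ 3 = 1 := by
    rw [pow_three']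
    refine Ext.ext ?_ ?_
    · show rB * rB * F.1 gb gb * rB * F.1 (gb * gb) gb = (F.1 1 1)⁻¹
      apply eq_inv_of_mul_eq_one_left
      calc rB * rB * F.1 gb gb * rB * F.1 (gb * gb) gb * F.1 1 1
          = rB ^ 3 * (F.1 1 1 * F.1 gb gb * F.1 (gb * gb) gb) := by
            rw [pow_three']; simp only [mul_comm, mul_left_comm, mul_assoc]
        _ = 1 := by rw [hrB, inv_mul_cancel]
    · show (gb * gb) * gb = 1
      decide
  have hC3 : C ^ 3 = 1 := by
    have h := commpow hCA hCB hc 3 1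
    rw [hA3, pow_one, one_mul, mul_one, mul_one] at h
    exact mul_eq_right.mp h.symm
  -- the normal form section
  set σ : G3 → Ext F := fun g => C ^ g.z.val * B ^ g.y.val * A ^ g.x.val with hσ
  have hσg : ∀ g : G3, (σ g).g = g := by
    intro g
    have : (σ g).g = Ext.π (σ g) := rfl
    rw [this, hσ]
    simp only [map_mul, map_pow]
    have hπA : Ext.π (F := F) A = ga := rfl
    have hπB : Ext.π (F := F) B = gb := rfl
    have hπC : Ext.π (F := F) C = gc := hCg
    rw [hπA, hπB, hπC, ga_pow, gb_pow, gc_pow]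
    refine Heisenberg.ext ?_ ?_ ?_ <;>
      simp [ZMod.natCast_val, ZMod.cast_id]
  have hσmul : ∀ g h : G3, σ (g * h) = σ g * σ h := by
    intro g h
    have key : σ g * σ h
        = C ^ (g.z.val + h.z.val + g.x.val * h.y.val)
          * B ^ (g.y.val + h.y.val) * A ^ (g.x.val + h.x.val) := by
      rw [hσ]
      simp only [pow_add]
      calc C ^ g.z.val * B ^ g.y.val * A ^ g.x.val * (C ^ h.z.val * B ^ h.y.val * A ^ h.x.val)
          = C ^ g.z.val * (C ^ h.z.val * (B ^ g.y.val * ((A ^ g.x.val * B ^ h.y.val) * A ^ h.x.val))) := by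
            have e1 : A ^ g.x.val * C ^ h.z.val = C ^ h.z.val * A ^ g.x.val :=
              ((hCA.pow_pow h.z.val g.x.val)).eq.symm
            have e2 : B ^ g.y.val * C ^ h.z.val = C ^ h.z.val * B ^ g.y.val :=
              ((hCB.pow_pow h.z.val g.y.val)).eq.symm
            simp only [mul_assoc]
            rw [swap3 e1, swap3 e2]
          _ = C ^ g.z.val * (C ^ h.z.val * (B ^ g.y.val * ((C ^ (g.x.val * h.y.val) * (B ^ h.y.val * A ^ g.x.val)) * A ^ h.x.val))) := by
            rw [commpow hCA hCB hc g.x.val h.y.val]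
          _ = C ^ g.z.val * C ^ h.z.val * C ^ (g.x.val * h.y.val) * (B ^ g.y.val * B ^ h.y.val) * (A ^ g.x.val * A ^ h.x.val) := by
            have e3 : B ^ g.y.val * C ^ (g.x.val * h.y.val)
                = C ^ (g.x.val * h.y.val) * B ^ g.y.val :=
              ((hCB.pow_pow _ _)).eq.symm
            simp only [mul_assoc]
            rw [swap3 e3]
    have hx : (g * h).x = g.x + h.x := rfl
    have hy : (g * h).y = g.y + h.y := rfl
    have hz : (g * h).z = g.z + h.z + g.x * h.y := rfl
    have ec : C ^ (g.z.val + h.z.val + g.x.val * h.y.val) = C ^ ((g * h).z.val) := by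
      apply pow_eq_of_zmod hC3
      push_cast [ZMod.natCast_val, ZMod.cast_id, hz]
      ring
    have eb : B ^ (g.y.val + h.y.val) = B ^ ((g * h).y.val) := by
      apply pow_eq_of_zmod hB3
      push_cast [ZMod.natCast_val, ZMod.cast_id, hy]
      ring
    have ea : A ^ (g.x.val + h.x.val) = A ^ ((g * h).x.val) := by
      apply pow_eq_of_zmod hA3
      push_cast [ZMod.natCast_val, ZMod.cast_id, hx]
      ring
    rw [key, ec, eb, ea]
  -- extract the coboundary
  refine ⟨fun g => ((σ g).s)⁻¹, fun g h => ?_⟩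
  have hrel : (σ (g * h)).s = (σ g).s * (σ h).s * F.1 g h := by
    rw [hσmul g h, Ext.mul_s, hσg g, hσg h]
  have hrelC := congrArg Units.val hrel
  push_cast at hrelC
  show F.1 g h = (σ g).s⁻¹ * (σ h).s⁻¹ * ((σ (g * h)).s⁻¹)⁻¹
  ext
  push_cast
  field_simp
  linear_combination (-1 : ℂ) * hrelC



@[simp] lemma f₁_apply (g h : G3) : f₁.1 g h = Φ (g.x * h.z + 2 * g.x ^ 2 * h.y) := rfl
@[simp] lemma f₂_apply (g h : G3) : f₂.1 g h = Φ (g.z * h.y + 2 * g.x * h.y ^ 2) := rfl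

@[simp] lemma Φ_zero : Φ 0 = 1 := by
  rw [Φ, show (0 : ZMod 3).val = 0 from rfl, pow_zero]

@[simp] lemma Φ_one' : Φ 1 = ω := by
  rw [Φ, show (1 : ZMod 3).val = 1 from rfl, pow_one]

@[simp] lemma Φ_two : Φ 2 = ω ^ 2 := by
  rw [Φ, show (2 : ZMod 3).val = 2 from rfl]

lemma ω_inv : (ω : ℂˣ)⁻¹ = ω ^ 2 := by
  rw [inv_eq_iff_mul_eq_one, ← pow_succ']
  exact ω_pow3

lemma coc_of_mem (F : twoCocycles G3) :
    ∀ g h k : G3, F.1 g h * F.1 (g * h) k = F.1 g (h * k) * F.1 h k := F.2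

lemma Bc_cube_a (F : twoCocycles G3) : Bc F.1 ga gc ^ 3 = 1 :=
  Bc_cube (coc_of_mem F) (by decide) (by decide)

lemma Bc_cube_b (F : twoCocycles G3) : Bc F.1 gb gc ^ 3 = 1 :=
  Bc_cube (coc_of_mem F) (by decide) (by decide)

lemma Bc_mul_cocycle (f f' : G3 → G3 → ℂˣ) (g h : G3) :
    Bc (f * f') g h = Bc f g h * Bc f' g h := by
  simp only [Bc, Pi.mul_apply, mul_inv]
  simp only [mul_comm, mul_left_comm, mul_assoc]

/-- The invariant map on 2-cocycles. -/
def φ : twoCocycles G3 →* Multiplicative (ZMod 3) × Multiplicative (ZMod 3) :=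
  MonoidHom.mk'
    (fun F => (Multiplicative.ofAdd (L (Bc F.1 ga gc)), Multiplicative.ofAdd (L (Bc F.1 gb gc))))
    (by
      intro F F'
      have hco : ((F * F' : twoCocycles G3) : G3 → G3 → ℂˣ) = F.1 * F'.1 := rfl
      refine Prod.ext ?_ ?_
      · show Multiplicative.ofAdd (L (Bc (F * F' : twoCocycles G3).1 ga gc))
          = Multiplicative.ofAdd (L (Bc F.1 ga gc)) * Multiplicative.ofAdd (L (Bc F'.1 ga gc))
        rw [hco, Bc_mul_cocycle, L_mul (Bc_cube_a F) (Bc_cube_a F'), ofAdd_add]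
      · show Multiplicative.ofAdd (L (Bc (F * F' : twoCocycles G3).1 gb gc))
          = Multiplicative.ofAdd (L (Bc F.1 gb gc)) * Multiplicative.ofAdd (L (Bc F'.1 gb gc))
        rw [hco, Bc_mul_cocycle, L_mul (Bc_cube_b F) (Bc_cube_b F'), ofAdd_add])

lemma φ_apply (F : twoCocycles G3) :
    φ F = (Multiplicative.ofAdd (L (Bc F.1 ga gc)), Multiplicative.ofAdd (L (Bc F.1 gb gc))) := rfl

lemma hker : ((twoCoboundaries G3).subgroupOf (twoCocycles G3)) = φ.ker := by
  ext F
  rw [Subgroup.mem_subgroupOf, MonoidHom.mem_ker]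
  constructor
  · rintro ⟨cc, hcc⟩
    have hb : ∀ g h : G3, g * h = h * g → Bc F.1 g h = 1 := by
      intro g h hcomm
      rw [Bc, hcc g h, hcc h g, hcomm, mul_inv_eq_one, mul_comm (cc g) (cc h)]
    rw [φ_apply, hb ga gc (by decide), hb gb gc (by decide), L_one, ofAdd_zero]
    rfl
  · intro hF
    rw [φ_apply] at hF
    have h1 : Multiplicative.ofAdd (L (Bc F.1 ga gc)) = 1 := congrArg Prod.fst hF
    have h2 : Multiplicative.ofAdd (L (Bc F.1 gb gc)) = 1 := congrArg Prod.snd hF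
    rw [show (1 : Multiplicative (ZMod 3)) = Multiplicative.ofAdd 0 from rfl] at h1 h2
    have hb1 : Bc F.1 ga gc = 1 := L_eq_zero (Bc_cube_a F) (Multiplicative.ofAdd.injective h1)
    have hb2 : Bc F.1 gb gc = 1 := L_eq_zero (Bc_cube_b F) (Multiplicative.ofAdd.injective h2)
    rw [Bc, mul_inv_eq_one] at hb1 hb2
    exact splits F hb1 hb2

lemma Bc_f₁_a : Bc f₁.1 ga gc = ω := by
  rw [Bc, f₁_apply, f₁_apply]
  have e1 : (ga.x * gc.z + 2 * ga.x ^ 2 * gc.y : ZMod 3) = 1 := by decide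
  have e2 : (gc.x * ga.z + 2 * gc.x ^ 2 * ga.y : ZMod 3) = 0 := by decide
  rw [e1, e2, Φ_one', Φ_zero, inv_one, mul_one]

lemma Bc_f₁_b : Bc f₁.1 gb gc = 1 := by
  rw [Bc, f₁_apply, f₁_apply]
  have e1 : (gb.x * gc.z + 2 * gb.x ^ 2 * gc.y : ZMod 3) = 0 := by decide
  have e2 : (gc.x * gb.z + 2 * gc.x ^ 2 * gb.y : ZMod 3) = 0 := by decide
  rw [e1, e2, Φ_zero, inv_one, mul_one]

lemma Bc_f₂_a : Bc f₂.1 ga gc = 1 := by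
  rw [Bc, f₂_apply, f₂_apply]
  have e1 : (ga.z * gc.y + 2 * ga.x * gc.y ^ 2 : ZMod 3) = 0 := by decide
  have e2 : (gc.z * ga.y + 2 * gc.x * ga.y ^ 2 : ZMod 3) = 0 := by decide
  rw [e1, e2, Φ_zero, inv_one, mul_one]

lemma Bc_f₂_b : Bc f₂.1 gb gc = ω ^ 2 := by
  rw [Bc, f₂_apply, f₂_apply]
  have e1 : (gb.z * gc.y + 2 * gb.x * gc.y ^ 2 : ZMod 3) = 0 := by decide
  have e2 : (gc.z * gb.y + 2 * gc.x * gb.y ^ 2 : ZMod 3) = 1 := by decide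
  rw [e1, e2, Φ_zero, Φ_one', one_mul, ω_inv]

lemma φ_f₁ : φ f₁ = (Multiplicative.ofAdd 1, Multiplicative.ofAdd 0) := by
  rw [φ_apply, Bc_f₁_a, Bc_f₁_b, L_ω, L_one]

lemma φ_f₂ : φ f₂ = (Multiplicative.ofAdd 0, Multiplicative.ofAdd 2) := by
  rw [φ_apply, Bc_f₂_a, Bc_f₂_b, L_ω_sq, L_one]

lemma ofAdd_pow (x : ZMod 3) (n : ℕ) :
    (Multiplicative.ofAdd x) ^ n = Multiplicative.ofAdd ((n : ZMod 3) * x) := by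
  rw [← ofAdd_nsmul, nsmul_eq_mul]

lemma hsurj : Function.Surjective φ := by
  rintro ⟨m, n⟩
  refine ⟨f₁ ^ (Multiplicative.toAdd m).val * f₂ ^ (2 * Multiplicative.toAdd n).val, ?_⟩
  rw [map_mul, map_pow, map_pow, φ_f₁, φ_f₂]
  have hcast : ∀ u : ZMod 3, ((u.val : ℕ) : ZMod 3) = u := by
    intro u; rw [ZMod.natCast_val, ZMod.cast_id]
  refine Prod.ext ?_ ?_
  · show (Multiplicative.ofAdd 1) ^ (Multiplicative.toAdd m).val
        * (Multiplicative.ofAdd 0) ^ (2 * Multiplicative.toAdd n).val = m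
    rw [ofAdd_pow, ofAdd_pow, hcast, hcast, ← ofAdd_add]
    rw [show (Multiplicative.toAdd m * 1 + 2 * Multiplicative.toAdd n * 0 : ZMod 3)
        = Multiplicative.toAdd m from by ring]
    exact ofAdd_toAdd m
  · show (Multiplicative.ofAdd 0) ^ (Multiplicative.toAdd m).val
        * (Multiplicative.ofAdd 2) ^ (2 * Multiplicative.toAdd n).val = n
    rw [ofAdd_pow, ofAdd_pow, hcast, hcast, ← ofAdd_add]
    rw [show (Multiplicative.toAdd m * 0 + 2 * Multiplicative.toAdd n * 2 : ZMod 3)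
        = Multiplicative.toAdd n from by
      have h4 : ∀ t : ZMod 3, 2 * t * 2 = t := by decide
      rw [mul_zero, zero_add, h4]]
    exact ofAdd_toAdd n

end SchurAux

theorem schurMultiplier_heisenberg :
    Nonempty (schurMultiplier (Heisenberg (ZMod 3)) ≃*
      Multiplicative (ZMod 3) × Multiplicative (ZMod 3)) := by
  refine ⟨?_⟩
  exact (QuotientGroup.quotientMulEquivOfEq SchurAux.hker).trans
    (QuotientGroup.quotientKerEquivOfSurjective SchurAux.φ SchurAux.hsurj)

end SchurAux
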